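/- For all degrees of freedom h ≥ 2, the Kullback–Leibler divergence from the standard Gaussian N(0,1) to the standard Student t-distribution with h degrees of freedom satisfies KL(N(0,1) ‖ T_h) ≤ log[Γ(h/2)·h^{1/2}/Γ((h+1)/2)] − (1/2)log(2e) + ((h+1)/2)·log(1 + 1/h). -/

import Mathlib

open MeasureTheory ProbabilityTheory Real
open scoped NNReal

open Set
open scoped ENNReal

-- helper: integral against withDensity of an ofReal density
lemma my_integral_withDensity {F : ℝ → ℝ} (hF : Measurable F) (h0 : ∀ x, 0 ≤ F x) (g : ℝ → ℝ) :
    ∫ x, g x ∂(volume.withDensity fun x => ENNReal.ofReal (F x)) = ∫ x, F x * g x := by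
  have : (fun x => ENNReal.ofReal (F x)) = (fun x => ((F x).toNNReal : ℝ≥0∞)) := rfl
  rw [this, integral_withDensity_eq_integral_smul hF.real_toNNReal g]
  congr 1; ext x
  rw [NNReal.smul_def, Real.coe_toNNReal _ (h0 x), smul_eq_mul]

lemma my_integrable_withDensity {F : ℝ → ℝ} (hF : Measurable F) (h0 : ∀ x, 0 ≤ F x) (g : ℝ → ℝ) :
    Integrable g (volume.withDensity fun x => ENNReal.ofReal (F x)) ↔
      Integrable (fun x => F x * g x) volume := by
  have : (fun x => ENNReal.ofReal (F x)) = (fun x => ((F x).toNNReal : ℝ≥0∞)) := rfl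
  rw [this, integrable_withDensity_iff_integrable_smul hF.real_toNNReal]
  constructor <;> intro hI <;> refine hI.congr (Filter.Eventually.of_forall fun x => ?_) <;>
    simp only [NNReal.smul_def, Real.coe_toNNReal _ (h0 x), smul_eq_mul]

lemma int_sq_exp : ∫ x : ℝ, x ^ 2 * Real.exp (-(1/2) * x ^ 2) = Real.sqrt (2 * π) := by
  have h1 : ∫ x : ℝ, x ^ 2 * Real.exp (-(1/2) * x ^ 2)
      = 2 * ∫ x in Ioi (0:ℝ), x ^ 2 * Real.exp (-(1/2) * x ^ 2) := by
    rw [← integral_comp_abs (f := fun x => x ^ 2 * Real.exp (-(1/2) * x ^ 2))]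
    congr 1; ext x; rw [sq_abs]
  have h2 : ∫ x in Ioi (0:ℝ), x ^ 2 * Real.exp (-(1/2) * x ^ 2)
      = ∫ x in Ioi (0:ℝ), x ^ (2:ℝ) * Real.exp (-(1/2) * x ^ (2:ℝ)) := by
    refine setIntegral_congr_fun measurableSet_Ioi (fun x hx => ?_)
    rw [show ((2:ℝ)) = ((2:ℕ):ℝ) by norm_num, Real.rpow_natCast]
  have h3 := integral_rpow_mul_exp_neg_mul_rpow (p := 2) (q := 2) (b := 1/2)
    (by norm_num) (by norm_num) (by norm_num)
  rw [h1, h2, h3]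
  have hG : Real.Gamma ((2 + 1) / 2) = Real.sqrt π / 2 := by
    rw [show ((2:ℝ) + 1)/2 = 1/2 + 1 by norm_num, Real.Gamma_add_one (by norm_num),
      Real.Gamma_one_half_eq]
    ring
  rw [hG]
  have h4 : ((1:ℝ)/2) ^ (-((2:ℝ) + 1) / 2) = 2 * Real.sqrt 2 := by
    rw [show (-((2:ℝ) + 1) / 2) = -(3/2) by norm_num,
      Real.rpow_neg (by norm_num : (0:ℝ) ≤ 1/2),
      show ((1:ℝ)/2) = 2⁻¹ by norm_num,
      Real.inv_rpow (by norm_num : (0:ℝ) ≤ 2), inv_inv,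
      show ((3:ℝ)/2) = 1 + 1/2 by norm_num,
      Real.rpow_add (by norm_num : (0:ℝ) < 2), Real.rpow_one,
      ← Real.sqrt_eq_rpow]
  rw [h4, Real.sqrt_mul (by norm_num : (0:ℝ) ≤ 2)]
  ring

lemma gaussPDF_eq (x : ℝ) :
    gaussianPDFReal 0 1 x = (Real.sqrt (2 * π))⁻¹ * Real.exp (-(1/2) * x ^ 2) := by
  rw [gaussianPDFReal]
  have h1 : -(x - 0) ^ 2 / (2 * ((1:ℝ≥0):ℝ)) = -(1/2) * x ^ 2 := by push_cast; ring
  rw [h1]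
  simp only [NNReal.coe_one, mul_one]

lemma gauss_sq_integrable : Integrable (fun x : ℝ => x ^ 2) (gaussianReal 0 1) := by
  rw [gaussianReal_of_var_ne_zero _ one_ne_zero, gaussianPDF_def,
    my_integrable_withDensity (measurable_gaussianPDFReal 0 1) (gaussianPDFReal_nonneg 0 1)]
  have h := (integrable_rpow_mul_exp_neg_mul_sq (b := 1/2) (by norm_num) (s := 2)
    (by norm_num)).const_mul (Real.sqrt (2 * π))⁻¹
  refine h.congr (Filter.Eventually.of_forall fun x => ?_)
  simp only [gaussPDF_eq, show ((2:ℝ)) = ((2:ℕ):ℝ) by norm_num, Real.rpow_natCast]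
  push_cast
  ring

lemma gauss_sq_integral : ∫ x, x ^ 2 ∂(gaussianReal 0 1) = 1 := by
  rw [gaussianReal_of_var_ne_zero _ one_ne_zero, gaussianPDF_def,
    my_integral_withDensity (measurable_gaussianPDFReal 0 1) (gaussianPDFReal_nonneg 0 1)]
  have : ∀ x : ℝ, gaussianPDFReal 0 1 x * x ^ 2
      = (Real.sqrt (2 * π))⁻¹ * (x ^ 2 * Real.exp (-(1/2) * x ^ 2)) := by
    intro x; rw [gaussPDF_eq]; ring
  simp_rw [this]
  rw [MeasureTheory.integral_const_mul, int_sq_exp, inv_mul_cancel₀]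
  positivity
/-- Kullback–Leibler divergence `∫ log (dμ/dν) dμ`. -/
noncomputable def klDiv (μ ν : Measure ℝ) : ℝ :=
  ∫ x, Real.log (μ.rnDeriv ν x).toReal ∂μ

/-- The standard Student t-distribution with `h` degrees of freedom, as a measure on `ℝ`. -/
noncomputable def studentT (h : ℝ) : Measure ℝ :=
  volume.withDensity fun θ => ENNReal.ofReal
    (Real.Gamma ((h + 1) / 2) / (Real.sqrt (h * Real.pi) * Real.Gamma (h / 2)) *
      (1 + θ ^ 2 / h) ^ (-((h + 1) / 2)))

theorem stmt3 (h : ℝ) (hh : 2 ≤ h) :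
    klDiv (gaussianReal 0 1) (studentT h) ≤
      Real.log (Real.Gamma (h / 2) * Real.sqrt h / Real.Gamma ((h + 1) / 2)) -
        (1 / 2) * Real.log (2 * Real.exp 1) + ((h + 1) / 2) * Real.log (1 + 1 / h) := by
  have hh0 : 0 < h := by linarith
  set c0 : ℝ := Real.Gamma ((h + 1) / 2) / (Real.sqrt (h * π) * Real.Gamma (h / 2)) with hc0
  set F : ℝ → ℝ := fun θ => c0 * (1 + θ ^ 2 / h) ^ (-((h + 1) / 2)) with hFdef
  have hbase : ∀ θ : ℝ, 0 < 1 + θ ^ 2 / h := fun θ => by positivity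
  have hc0pos : 0 < c0 := by
    refine div_pos (Real.Gamma_pos_of_pos (by linarith)) ?_
    exact mul_pos (Real.sqrt_pos.mpr (by positivity)) (Real.Gamma_pos_of_pos (by linarith))
  have hFpos : ∀ θ, 0 < F θ := fun θ => mul_pos hc0pos (Real.rpow_pos_of_pos (hbase θ) _)
  have hFcont : Continuous F := by
    refine continuous_const.mul (Continuous.rpow_const ?_ fun x => Or.inl (hbase x).ne') 
    fun_prop
  have hFmeas : Measurable F := hFcont.measurable
  have hst : studentT h = volume.withDensity fun θ => ENNReal.ofReal (F θ) := rfl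
  set ρ : ℝ → ℝ≥0∞ := fun x => gaussianPDF 0 1 x / ENNReal.ofReal (F x) with hρ
  have hρmeas : Measurable ρ := (measurable_gaussianPDF 0 1).div hFmeas.ennreal_ofReal
  have hfne0 : ∀ x, ENNReal.ofReal (F x) ≠ 0 := fun x => (ENNReal.ofReal_pos.mpr (hFpos x)).ne'
  have key : (studentT h).withDensity ρ = gaussianReal 0 1 := by
    rw [gaussianReal_of_var_ne_zero _ one_ne_zero, hst,
      ← withDensity_mul _ hFmeas.ennreal_ofReal hρmeas]
    congr 1
    ext x
    simp only [Pi.mul_apply, hρ]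
    exact ENNReal.mul_div_cancel (hfne0 x) ENNReal.ofReal_ne_top
  haveI : SigmaFinite (studentT h) := by rw [hst]; infer_instance
  have hrn : (gaussianReal 0 1).rnDeriv (studentT h) =ᵐ[studentT h] ρ := by
    have := Measure.rnDeriv_withDensity (studentT h) hρmeas
    rwa [key] at this
  have hac1 : (volume : Measure ℝ) ≪ studentT h := by
    rw [hst]
    exact withDensity_absolutelyContinuous' hFmeas.ennreal_ofReal.aemeasurable
      (Filter.Eventually.of_forall hfne0)
  have hac : gaussianReal 0 1 ≪ studentT h :=
    (gaussianReal_absolutelyContinuous 0 one_ne_zero).trans hac1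
  have hrn' : (gaussianReal 0 1).rnDeriv (studentT h) =ᵐ[gaussianReal 0 1] ρ := hac.ae_eq hrn
  -- the pointwise formula
  set A : ℝ := -Real.log (Real.sqrt (2 * π)) - Real.log c0 with hA
  set L : ℝ → ℝ := fun x => Real.log (1 + x ^ 2 / h) with hL
  set φ : ℝ → ℝ := fun x => A + -(1/2) * x ^ 2 + (h + 1) / 2 * L x with hφ
  have hpt : ∀ x : ℝ, Real.log ((ρ x).toReal) = φ x := by
    intro x
    have h1 : (ρ x).toReal = gaussianPDFReal 0 1 x / F x := by
      rw [hρ]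
      simp only [gaussianPDF]
      rw [ENNReal.toReal_div, ENNReal.toReal_ofReal (gaussianPDFReal_nonneg 0 1 x),
        ENNReal.toReal_ofReal (hFpos x).le]
    have hsq : (0:ℝ) < Real.sqrt (2 * π) := Real.sqrt_pos.mpr (by positivity)
    rw [h1, Real.log_div (gaussianPDFReal_pos 0 1 x one_ne_zero).ne' (hFpos x).ne',
      gaussPDF_eq, Real.log_mul (inv_ne_zero hsq.ne') (Real.exp_ne_zero _),
      Real.log_inv, Real.log_exp, hFdef]
    simp only []
    rw [Real.log_mul hc0pos.ne' (Real.rpow_pos_of_pos (hbase x) _).ne',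
      Real.log_rpow (hbase x)]
    simp only [hφ, hL, hA]
    ring
  -- integrability of L
  have hLmeas : Measurable L :=
    Real.measurable_log.comp (by fun_prop : Measurable fun x : ℝ => 1 + x ^ 2 / h)
  have hIntL : Integrable L (gaussianReal 0 1) := by
    refine Integrable.mono' (gauss_sq_integrable.const_mul (1/h))
      hLmeas.aestronglyMeasurable (Filter.Eventually.of_forall fun x => ?_)
    have hxx : (0:ℝ) ≤ x ^ 2 / h := by positivity
    have h1 : (0:ℝ) ≤ L x := Real.log_nonneg (by linarith)
    have h2 : L x ≤ 1 + x ^ 2 / h - 1 := Real.log_le_sub_one_of_pos (hbase x)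
    rw [Real.norm_eq_abs, abs_of_nonneg h1]
    have : x ^ 2 / h = 1 / h * x ^ 2 := by ring
    linarith [this ▸ h2]
  -- compute klDiv
  have hkl : klDiv (gaussianReal 0 1) (studentT h)
      = A + -(1/2) * 1 + (h + 1) / 2 * ∫ x, L x ∂(gaussianReal 0 1) := by
    have e1 : klDiv (gaussianReal 0 1) (studentT h) = ∫ x, φ x ∂(gaussianReal 0 1) := by
      unfold klDiv
      refine integral_congr_ae ?_
      filter_upwards [hrn'] with x hx
      rw [hx, hpt x]
    have i1 : Integrable (fun x : ℝ => A + -(1/2) * x ^ 2) (gaussianReal 0 1) :=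
      (integrable_const A).add (gauss_sq_integrable.const_mul (-(1/2)))
    have i2 : Integrable (fun x : ℝ => (h + 1) / 2 * L x) (gaussianReal 0 1) :=
      hIntL.const_mul ((h+1)/2)
    have iB : Integrable (fun x : ℝ => -(1/2) * x ^ 2) (gaussianReal 0 1) :=
      gauss_sq_integrable.const_mul (-(1/2))
    rw [e1, hφ]
    simp only []
    rw [integral_add i1 i2, integral_add (integrable_const A) iB,
      integral_const, MeasureTheory.integral_const_mul, MeasureTheory.integral_const_mul,
      gauss_sq_integral]
    simp
  -- the Jensen-type bound
  have hJ : ∫ x, L x ∂(gaussianReal 0 1) ≤ Real.log (1 + 1/h) := by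
    set c : ℝ := 1 + 1/h with hc
    have hcpos : 0 < c := by positivity
    have pt : ∀ x : ℝ, L x ≤ (Real.log c - 1 + 1/c) + 1/(c*h) * x ^ 2 := by
      intro x
      have h1 := Real.log_le_sub_one_of_pos (show 0 < (1 + x ^ 2 / h) / c by positivity)
      rw [Real.log_div (hbase x).ne' hcpos.ne'] at h1
      have e : (1 + x ^ 2 / h) / c = 1/c + 1/(c*h) * x ^ 2 := by
        field_simp
      rw [e] at h1
      simp only [hL]
      linarith
    have i3 : Integrable (fun x : ℝ => (Real.log c - 1 + 1/c) + 1/(c*h) * x ^ 2)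
        (gaussianReal 0 1) :=
      (integrable_const (Real.log c - 1 + 1/c)).add (gauss_sq_integrable.const_mul (1/(c*h)))
    have hmono := integral_mono hIntL i3 pt
    rw [integral_add (integrable_const _) (gauss_sq_integrable.const_mul _),
      integral_const, MeasureTheory.integral_const_mul, gauss_sq_integral] at hmono
    have e2 : (Real.log c - 1 + 1/c) + 1/(c*h) * 1 = Real.log c := by
      have : 1/c + 1/(c*h) = 1 := by
        rw [hc]; field_simp
      linarith
    simp only [measure_univ, probReal_univ, ENNReal.toReal_one, smul_eq_mul, mul_one, one_mul] at hmono
    rw [hc] at e2 ⊢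
    linarith
  -- final arithmetic
  have hΓ1 : (0:ℝ) < Real.Gamma ((h+1)/2) := Real.Gamma_pos_of_pos (by linarith)
  have hΓ2 : (0:ℝ) < Real.Gamma (h/2) := Real.Gamma_pos_of_pos (by linarith)
  have hsh : (0:ℝ) < Real.sqrt h := Real.sqrt_pos.mpr hh0
  have harith : A + -(1/2) * 1
      = Real.log (Real.Gamma (h / 2) * Real.sqrt h / Real.Gamma ((h + 1) / 2)) -
        (1 / 2) * Real.log (2 * Real.exp 1) := by
    have e1 : Real.log c0 = Real.log (Real.Gamma ((h+1)/2))
        - (Real.log (Real.sqrt h) + (1/2) * Real.log π + Real.log (Real.Gamma (h/2))) := by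
      rw [hc0, Real.log_div hΓ1.ne' (by positivity), Real.log_mul (by positivity) hΓ2.ne',
        Real.sqrt_mul hh0.le, Real.log_mul hsh.ne' (Real.sqrt_pos.mpr Real.pi_pos).ne',
        Real.log_sqrt Real.pi_pos.le]
      ring
    have e2 : Real.log (Real.sqrt (2*π)) = (1/2) * (Real.log 2 + Real.log π) := by
      rw [Real.log_sqrt (by positivity), Real.log_mul two_ne_zero Real.pi_pos.ne']
      ring
    have e3 : Real.log (Real.Gamma (h / 2) * Real.sqrt h / Real.Gamma ((h + 1) / 2))
        = Real.log (Real.Gamma (h/2)) + Real.log (Real.sqrt h)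
          - Real.log (Real.Gamma ((h+1)/2)) := by
      rw [Real.log_div (by positivity) hΓ1.ne', Real.log_mul hΓ2.ne' hsh.ne']
    have e4 : Real.log (2 * Real.exp 1) = Real.log 2 + 1 := by
      rw [Real.log_mul two_ne_zero (Real.exp_ne_zero 1), Real.log_exp]
    rw [hA, e1, e2, e3, e4]
    ring
  rw [hkl, harith]
  have hCpos : (0:ℝ) < (h+1)/2 := by linarith
  have := mul_le_mul_of_nonneg_left hJ hCpos.le
  linarith
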